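/- For every dimension d ≥ 1, the generating function G_d(x) = Σ_{μ≥0} N(d,μ) x^μ, viewed as a formal power series over ℤ, satisfies G_d(x) = G_1(x)^d · (1-x)^{d-1}, where G_1(x) = Σ_{ℓ≥0} f(ℓ+1) x^ℓ. -/

import Mathlib

/-- Multi-indices `i : Fin d → ℕ` with `i k ≥ 1` for all `k` and `∑ k, i k = d + μ`. -/
def smolyakIndices (d μ : ℕ) : Finset (Fin d → ℕ) :=
  (Fintype.piFinset fun _ => Finset.Icc 1 (d + μ)).filter fun i => ∑ k, i k = d + μ

/-- The Smolyak grid `Γ(d, μ)` based on the node sets `S`. -/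
noncomputable def smolyakGrid (S : ℕ → Finset ℝ) (d μ : ℕ) : Finset (Fin d → ℝ) :=
  (smolyakIndices d μ).biUnion fun i => Fintype.piFinset fun k => S (i k)

/-- `N(d, μ)`: the number of nodes in the Smolyak grid. -/
noncomputable def smolyakCard (S : ℕ → Finset ℝ) (d μ : ℕ) : ℕ :=
  (smolyakGrid S d μ).card

namespace SmolyakAux

open Finset PowerSeries

/-- Difference sets: `Dset S j = S j \ S (j-1)` with `Dset S 1 = S 1`, `Dset S 0 = ∅`. -/
noncomputable def Dset (S : ℕ → Finset ℝ) : ℕ → Finset ℝ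
  | 0 => ∅
  | 1 => S 1
  | (j + 2) => S (j + 2) \ S (j + 1)

/-- Multi-indices with all entries `≥ 1` and total sum at most `d + μ`. -/
def below (d μ : ℕ) : Finset (Fin d → ℕ) :=
  (Fintype.piFinset fun _ => Finset.Icc 1 (d + μ)).filter fun i => ∑ k, i k ≤ d + μ

variable {S : ℕ → Finset ℝ}

lemma Smono (hS : ∀ k, 1 ≤ k → S k ⊆ S (k + 1)) :
    ∀ a b, 1 ≤ a → a ≤ b → S a ⊆ S b := by
  intro a b ha hab
  induction b, hab using Nat.le_induction with
  | base => exact Finset.Subset.rfl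
  | succ b hb ih => exact ih.trans (hS b (ha.trans hb))

lemma D_succ (j : ℕ) (hj : 1 ≤ j) : Dset S (j + 1) = S (j + 1) \ S j := by
  cases j with
  | zero => omega
  | succ m => rfl

lemma D_subset : ∀ j, 1 ≤ j → Dset S j ⊆ S j
  | 0, h => by omega
  | 1, _ => Finset.Subset.rfl
  | (j + 2), _ => Finset.sdiff_subset

lemma mem_S_iff (hS : ∀ k, 1 ≤ k → S k ⊆ S (k + 1)) (j : ℕ) (hj : 1 ≤ j) (x : ℝ) :
    x ∈ S j ↔ ∃ l, 1 ≤ l ∧ l ≤ j ∧ x ∈ Dset S l := by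
  induction j, hj using Nat.le_induction with
  | base =>
    constructor
    · intro hx; exact ⟨1, le_rfl, le_rfl, hx⟩
    · rintro ⟨l, h1, h2, h3⟩
      have : l = 1 := by omega
      subst this; exact h3
  | succ j hj ih =>
    constructor
    · intro hx
      by_cases h : x ∈ S j
      · obtain ⟨l, h1, h2, h3⟩ := ih.mp h
        exact ⟨l, h1, by omega, h3⟩
      · exact ⟨j + 1, by omega, le_rfl, by
          rw [D_succ j hj]; exact Finset.mem_sdiff.mpr ⟨hx, h⟩⟩
    · rintro ⟨l, h1, h2, h3⟩
      exact Smono hS l (j + 1) h1 h2 (D_subset l h1 h3)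

lemma D_disjoint (hS : ∀ k, 1 ≤ k → S k ⊆ S (k + 1)) {l l' : ℕ} (hl : 1 ≤ l) (hll : l < l') :
    Disjoint (Dset S l) (Dset S l') := by
  obtain ⟨m, rfl⟩ : ∃ m, l' = m + 1 := ⟨l' - 1, by omega⟩
  have hm : 1 ≤ m := by omega
  rw [D_succ m hm]
  rw [Finset.disjoint_left]
  intro x hxl hx'
  have hxm : x ∈ S m := Smono hS l m hl (by omega) (D_subset l hl hxl)
  exact (Finset.mem_sdiff.mp hx').2 hxm

lemma grid_eq (hS : ∀ k, 1 ≤ k → S k ⊆ S (k + 1)) (d μ : ℕ) (hd : 1 ≤ d) :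
    smolyakGrid S d μ =
      (below d μ).biUnion fun i => Fintype.piFinset fun k => Dset S (i k) := by
  ext x
  simp only [smolyakGrid, smolyakIndices, below, Finset.mem_biUnion, Finset.mem_filter,
    Fintype.mem_piFinset, Finset.mem_Icc]
  constructor
  · rintro ⟨i, ⟨hi1, hi2⟩, hx⟩
    have h : ∀ k, ∃ l, 1 ≤ l ∧ l ≤ i k ∧ x k ∈ Dset S l := by
      intro k
      exact (mem_S_iff hS (i k) (hi1 k).1 (x k)).mp (hx k)
    choose l hl1 hl2 hl3 using h
    refine ⟨l, ⟨fun k => ⟨hl1 k, le_trans (hl2 k) (hi1 k).2⟩, ?_⟩, hl3⟩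
    calc ∑ k, l k ≤ ∑ k, i k := Finset.sum_le_sum fun k _ => hl2 k
      _ = d + μ := hi2
  · rintro ⟨l, ⟨hl1, hl2⟩, hx⟩
    set k0 : Fin d := ⟨0, hd⟩
    set i : Fin d → ℕ := Function.update l k0 (l k0 + (d + μ - ∑ k, l k)) with hi
    have hsum : ∑ k, i k = d + μ := by
      rw [hi, Finset.sum_update_of_mem (Finset.mem_univ k0)]
      have h0 : ∑ k, l k = l k0 + ∑ k ∈ Finset.univ.erase k0, l k := by
        rw [Finset.add_sum_erase _ _ (Finset.mem_univ k0)]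
      have := hl2
      rw [show (Finset.univ \ {k0} : Finset (Fin d)) = Finset.univ.erase k0 by
        rw [Finset.erase_eq]]
      omega
    have hge : ∀ k, l k ≤ i k := by
      intro k
      rw [hi]
      rcases eq_or_ne k k0 with rfl | h
      · rw [Function.update_self]; omega
      · rw [Function.update_of_ne h]
    have hige : ∀ k, 1 ≤ i k := fun k => le_trans (hl1 k).1 (hge k)
    have hile : ∀ k, i k ≤ d + μ := by
      intro k
      rw [← hsum]
      exact Finset.single_le_sum (fun k _ => Nat.zero_le (i k)) (Finset.mem_univ k)
    refine ⟨i, ⟨fun k => ⟨hige k, hile k⟩, hsum⟩, fun k => ?_⟩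
    exact Smono hS (l k) (i k) (hl1 k).1 (hge k) (D_subset (l k) (hl1 k).1 (hx k))

lemma card_grid (hS : ∀ k, 1 ≤ k → S k ⊆ S (k + 1)) (d μ : ℕ) (hd : 1 ≤ d) :
    smolyakCard S d μ = ∑ i ∈ below d μ, ∏ k, (Dset S (i k)).card := by
  rw [smolyakCard, grid_eq hS d μ hd, Finset.card_biUnion]
  · refine Finset.sum_congr rfl fun i _ => ?_
    exact Fintype.card_piFinset _
  · intro i hi j hj hij
    simp only [below, Finset.mem_coe, Finset.mem_filter, Fintype.mem_piFinset, Finset.mem_Icc] at hi hj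
    obtain ⟨k, hk⟩ := Function.ne_iff.mp hij
    rw [Function.onFun, Finset.disjoint_left]
    intro x hxi hxj
    have h1 := Fintype.mem_piFinset.mp hxi k
    have h2 := Fintype.mem_piFinset.mp hxj k
    rcases lt_or_gt_of_ne hk with h | h
    · exact Finset.disjoint_left.mp (D_disjoint hS (hi.1 k).1 h) h1 h2
    · exact Finset.disjoint_left.mp (D_disjoint hS (hj.1 k).1 h) h2 h1

end SmolyakAux

open Finset PowerSeries SmolyakAux in
/-- The generating function `G_d(x) = ∑_μ N(d,μ) xᵘ` of a nested Smolyak grid satisfies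
`G_d(x) = G_1(x)^d (1 - x)^(d-1)` where `G_1(x) = ∑_ℓ f(ℓ+1) xˡ`. -/
theorem smolyak_generatingFunction
    (f : ℕ → ℕ) (hf_mono : ∀ k, 1 ≤ k → f k ≤ f (k + 1)) (hf_pos : ∀ k, 1 ≤ k → 1 ≤ f k)
    (S : ℕ → Finset ℝ) (hS_nested : ∀ k, 1 ≤ k → S k ⊆ S (k + 1))
    (hS_card : ∀ k, 1 ≤ k → (S k).card = f k)
    (d : ℕ) (hd : 1 ≤ d) :
    (PowerSeries.mk fun μ => (smolyakCard S d μ : ℤ)) =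
      (PowerSeries.mk fun ℓ => (f (ℓ + 1) : ℤ)) ^ d * (1 - PowerSeries.X) ^ (d - 1) := by
  set G1 : PowerSeries ℤ := PowerSeries.mk fun ℓ => (f (ℓ + 1) : ℤ) with hG1
  set Gd : PowerSeries ℤ := PowerSeries.mk fun μ => (smolyakCard S d μ : ℤ) with hGd
  set P : PowerSeries ℤ := PowerSeries.mk fun j => ((Dset S (j + 1)).card : ℤ) with hP
  -- coefficients of Dset
  have hD1 : ((Dset S 1).card : ℤ) = (f 1 : ℤ) := by
    show ((S 1).card : ℤ) = (f 1 : ℤ)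
    rw [hS_card 1 le_rfl]
  have hDsucc : ∀ j, 1 ≤ j → ((Dset S (j + 1)).card : ℤ) = (f (j + 1) : ℤ) - (f j : ℤ) := by
    intro j hj
    rw [D_succ j hj, Finset.card_sdiff_of_subset (hS_nested j hj)]
    rw [hS_card (j + 1) (by omega), hS_card j hj]
    exact Nat.cast_sub (hf_mono j hj)
  -- Claim A : (1 - X) * G1 = P
  have hA : (1 - X) * G1 = P := by
    ext n
    rw [sub_mul, one_mul, map_sub]
    cases n with
    | zero =>
      simp only [hG1, hP, coeff_mk, coeff_zero_eq_constantCoeff, map_mul,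
        constantCoeff_X, zero_mul, mul_comm, sub_zero]
      exact hD1.symm
    | succ n =>
      rw [coeff_succ_X_mul]
      simp only [hG1, hP, coeff_mk]
      rw [hDsucc (n + 1) (by omega)]
  -- Claim B : coefficients of P ^ d
  have hB : ∀ n, (PowerSeries.coeff n) (P ^ d) =
      ∑ i ∈ smolyakIndices d n, ∏ k, ((Dset S (i k)).card : ℤ) := by
    intro n
    rw [PowerSeries.coeff_pow]
    refine Finset.sum_nbij' (fun l => fun k : Fin d => l k.val + 1)
      (fun i => Finsupp.onFinset (Finset.range d)
        (fun m => if h : m < d then i ⟨m, h⟩ - 1 else 0) ?_) ?_ ?_ ?_ ?_ ?_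
    · intro m hm
      have hm' : (if h : m < d then i ⟨m, h⟩ - 1 else 0) ≠ 0 := hm
      rw [Finset.mem_range]
      by_contra hmd
      rw [dif_neg (by omega)] at hm'
      exact hm' rfl
    · -- forward membership
      intro l hl
      rw [Finset.mem_finsuppAntidiag] at hl
      obtain ⟨hsum, hsupp⟩ := hl
      have hsum' : ∑ m ∈ Finset.range d, l m = n := hsum
      simp only [smolyakIndices, Finset.mem_filter, Fintype.mem_piFinset, Finset.mem_Icc]
      have hfin : ∑ k : Fin d, (l k.val + 1) = d + n := by
        rw [Finset.sum_add_distrib, Finset.sum_const, Finset.card_univ, Fintype.card_fin,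
          smul_eq_mul, mul_one]
        rw [Fin.sum_univ_eq_sum_range (fun m => l m) d, hsum']
        ring
      refine ⟨fun k => ⟨by omega, ?_⟩, hfin⟩
      have : l k.val + 1 ≤ ∑ j : Fin d, (l j.val + 1) :=
        Finset.single_le_sum (f := fun j : Fin d => l j.val + 1)
          (fun j _ => Nat.zero_le _) (Finset.mem_univ k)
      omega
    · -- backward membership
      intro i hi
      simp only [smolyakIndices, Finset.mem_filter, Fintype.mem_piFinset, Finset.mem_Icc] at hi
      obtain ⟨hi1, hi2⟩ := hi
      rw [Finset.mem_finsuppAntidiag]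
      refine ⟨?_, Finsupp.support_onFinset_subset⟩
      have key : ∑ m ∈ Finset.range d, (if h : m < d then i ⟨m, h⟩ - 1 else 0) = n := by
        rw [← Fin.sum_univ_eq_sum_range (fun m => if h : m < d then i ⟨m, h⟩ - 1 else 0) d]
        have h3 : ∑ k : Fin d, ((if h : (k : ℕ) < d then i ⟨k, h⟩ - 1 else 0) + 1)
            = ∑ k, i k := by
          refine Finset.sum_congr rfl fun k _ => ?_
          rw [dif_pos k.isLt]
          have := (hi1 k).1
          have hk : (⟨(k : ℕ), k.isLt⟩ : Fin d) = k := rfl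
          rw [hk]
          omega
        rw [Finset.sum_add_distrib, Finset.sum_const, Finset.card_univ, Fintype.card_fin,
          smul_eq_mul, mul_one] at h3
        omega
      exact key
    · -- left inverse
      intro l hl
      rw [Finset.mem_finsuppAntidiag] at hl
      ext m
      simp only [Finsupp.onFinset_apply]
      by_cases h : m < d
      · rw [dif_pos h]
        show l m + 1 - 1 = l m
        omega
      · rw [dif_neg h]
        by_contra hne
        have : m ∈ l.support := Finsupp.mem_support_iff.mpr (fun h0 => hne h0.symm)
        have := hl.2 this
        rw [Finset.mem_range] at this
        omega
    · -- right inverse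
      intro i hi
      simp only [smolyakIndices, Finset.mem_filter, Fintype.mem_piFinset, Finset.mem_Icc] at hi
      funext k
      beta_reduce
      rw [Finsupp.onFinset_apply, dif_pos k.isLt]
      have := (hi.1 k).1
      have hk : (⟨k.val, k.isLt⟩ : Fin d) = k := rfl
      rw [hk]
      omega
    · -- values agree
      intro l hl
      beta_reduce
      rw [← Fin.prod_univ_eq_prod_range (fun m => (PowerSeries.coeff (l m)) P) d]
      refine Finset.prod_congr rfl fun k _ => ?_
      rw [hP, coeff_mk]
  -- Claim C : (1 - X) * Gd = P ^ d
  have hbelow0 : below d 0 = smolyakIndices d 0 := by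
    ext i
    simp only [below, smolyakIndices, Finset.mem_filter, Fintype.mem_piFinset, Finset.mem_Icc]
    constructor
    · rintro ⟨h1, h2⟩
      refine ⟨h1, le_antisymm h2 ?_⟩
      calc d + 0 = ∑ _k : Fin d, 1 := by simp
        _ ≤ ∑ k, i k := Finset.sum_le_sum fun k _ => (h1 k).1
    · rintro ⟨h1, h2⟩
      exact ⟨h1, le_of_eq h2⟩
  have hsplit : ∀ μ : ℕ, below d (μ + 1) = below d μ ∪ smolyakIndices d (μ + 1) ∧
      Disjoint (below d μ) (smolyakIndices d (μ + 1)) := by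
    intro μ
    constructor
    · ext i
      simp only [below, smolyakIndices, Finset.mem_union, Finset.mem_filter,
        Fintype.mem_piFinset, Finset.mem_Icc]
      constructor
      · rintro ⟨h1, h2⟩
        by_cases h : ∑ k, i k ≤ d + μ
        · left
          refine ⟨fun k => ⟨(h1 k).1, ?_⟩, h⟩
          have : i k ≤ ∑ j, i j :=
            Finset.single_le_sum (fun j _ => Nat.zero_le _) (Finset.mem_univ k)
          omega
        · right
          exact ⟨h1, by omega⟩
      · rintro (⟨h1, h2⟩ | ⟨h1, h2⟩)
        · exact ⟨fun k => ⟨(h1 k).1, by have := (h1 k).2; omega⟩, by omega⟩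
        · exact ⟨h1, le_of_eq h2⟩
    · rw [Finset.disjoint_left]
      intro i hi hi'
      simp only [below, Finset.mem_filter] at hi
      simp only [smolyakIndices, Finset.mem_filter] at hi'
      omega
  have hC : (1 - X) * Gd = P ^ d := by
    ext n
    rw [sub_mul, one_mul, map_sub, hB n]
    cases n with
    | zero =>
      rw [show ((PowerSeries.coeff 0) (X * Gd) : ℤ) = 0 by
        simp [coeff_zero_eq_constantCoeff, map_mul, constantCoeff_X]]
      rw [hGd, coeff_mk, sub_zero, card_grid hS_nested d 0 hd, ← hbelow0]
      push_cast
      rfl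
    | succ μ =>
      rw [coeff_succ_X_mul]
      simp only [hGd, coeff_mk]
      rw [card_grid hS_nested d (μ + 1) hd, card_grid hS_nested d μ hd]
      obtain ⟨hu, hdisj⟩ := hsplit μ
      rw [hu, Finset.sum_union hdisj]
      push_cast
      ring
  -- Conclusion
  have hne : (1 - X : PowerSeries ℤ) ≠ 0 := by
    intro h
    have := congrArg (PowerSeries.coeff 1) h
    simp at this
  obtain ⟨e, rfl⟩ : ∃ e, d = e + 1 := ⟨d - 1, by omega⟩
  have key : (1 - X) * Gd = (1 - X) * (G1 ^ (e + 1) * (1 - X) ^ (e + 1 - 1)) := by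
    rw [hC, ← hA, mul_pow]
    simp only [Nat.add_sub_cancel]
    ring
  exact mul_left_cancel₀ hne key
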